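/- arXiv:1602.03471 — 2 statements merged into one kernel-verified Lean document; each statement's English description precedes it below -/
import Mathlib

section
/- In the constant column weight group testing design, conditional on the number M of positive tests, the probability that COMP succeeds equals (1 - (M/T)^L)^{N-K}. -/
open Finset Classical
noncomputable section
open scoped Classical

/-- In the constant column weight design, each of the `N` items makes `L` uniform
choices (with replacement) among the `T` tests; all such designs are equally likely.
A test is positive iff some defective item (a member of `𝒦`, with `|𝒦| = K`) chose it. -/
def positiveTests {N L T : ℕ} (𝒦 : Finset (Fin N)) (ω : Fin N → Fin L → Fin T) :
    Finset (Fin T) :=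
  𝒦.biUnion fun i => Finset.image (ω i) Finset.univ

/-- COMP succeeds iff every non-defective item appears in some negative test. -/
def compSucceeds {N L T : ℕ} (𝒦 : Finset (Fin N)) (ω : Fin N → Fin L → Fin T) : Prop :=
  ∀ i, i ∉ 𝒦 → ∃ l, ω i l ∉ positiveTests 𝒦 ω

def posOf {N L T : ℕ} (𝒦 : Finset (Fin N)) (f : {x : Fin N // x ∈ 𝒦} → Fin L → Fin T) :
    Finset (Fin T) :=
  Finset.univ.biUnion fun i => Finset.image (f i) Finset.univ

lemma positiveTests_eq {N L T : ℕ} (𝒦 : Finset (Fin N)) (ω : Fin N → Fin L → Fin T) :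
    positiveTests 𝒦 ω = posOf 𝒦 (fun i => ω i.1) := by
  ext t
  simp only [positiveTests, posOf, Finset.mem_biUnion, Finset.mem_image, Finset.mem_univ,
    true_and, exists_true_left]
  aesop

lemma card_all_mem {L T : ℕ} (S : Finset (Fin T)) :
    Nat.card {b : Fin L → Fin T // ∀ l, b l ∈ S} = S.card ^ L := by
  rw [Nat.card_congr (Equiv.subtypePiEquivPi (p := fun (_ : Fin L) b => b ∈ S)),
    Nat.card_pi]
  simp [Nat.card_eq_fintype_card]

lemma card_exists_not_mem {L T : ℕ} (S : Finset (Fin T)) :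
    Nat.card {b : Fin L → Fin T // ∃ l, b l ∉ S} = T ^ L - S.card ^ L := by
  have e : {b : Fin L → Fin T // ∃ l, b l ∉ S} ≃ {b : Fin L → Fin T // ¬ ∀ l, b l ∈ S} :=
    Equiv.subtypeEquivRight (fun b => by push_neg; rfl)
  rw [Nat.card_congr e, Nat.card_eq_fintype_card, Fintype.card_subtype_compl,
    ← Nat.card_eq_fintype_card, ← Nat.card_eq_fintype_card, card_all_mem, Nat.card_fun]
  simp [Nat.card_eq_fintype_card]

lemma card_filter_split {N L T : ℕ} (𝒦 : Finset (Fin N)) (P : Finset (Fin T) → Prop)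
    (Q : (Fin L → Fin T) → Finset (Fin T) → Prop) (c : ℕ)
    (hc : ∀ S : Finset (Fin T), P S → Nat.card {b : Fin L → Fin T // Q b S} = c) :
    Nat.card {ω : Fin N → Fin L → Fin T //
        P (positiveTests 𝒦 ω) ∧ ∀ i ∉ 𝒦, Q (ω i) (positiveTests 𝒦 ω)}
      = Nat.card {f : {x : Fin N // x ∈ 𝒦} → Fin L → Fin T //
          P (posOf 𝒦 f)} * c ^ (Nat.card {x : Fin N // x ∉ 𝒦}) := by
  have e1 : {ω : Fin N → Fin L → Fin T //
        P (positiveTests 𝒦 ω) ∧ ∀ i ∉ 𝒦, Q (ω i) (positiveTests 𝒦 ω)}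
      ≃ {p : ({x : Fin N // x ∈ 𝒦} → Fin L → Fin T) × ({x : Fin N // ¬ x ∈ 𝒦} → Fin L → Fin T) //
          P (posOf 𝒦 p.1) ∧ ∀ i : {x : Fin N // ¬ x ∈ 𝒦}, Q (p.2 i) (posOf 𝒦 p.1)} := by
    apply (Equiv.piEquivPiSubtypeProd (fun i : Fin N => i ∈ 𝒦)
      (fun _ => Fin L → Fin T)).subtypeEquiv
    intro ω
    rw [positiveTests_eq]
    constructor
    · rintro ⟨h1, h2⟩; exact ⟨h1, fun i => h2 i.1 i.2⟩
    · rintro ⟨h1, h2⟩; exact ⟨h1, fun i hi => h2 ⟨i, hi⟩⟩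
  rw [Nat.card_congr e1]
  rw [Nat.card_congr (Equiv.subtypeProdEquivSigmaSubtype
    (fun (f : {x : Fin N // x ∈ 𝒦} → Fin L → Fin T)
         (g : {x : Fin N // ¬ x ∈ 𝒦} → Fin L → Fin T) =>
      P (posOf 𝒦 f) ∧ ∀ i, Q (g i) (posOf 𝒦 f)))]
  rw [Nat.card_eq_fintype_card, Fintype.card_sigma]
  have key : ∀ f : {x : Fin N // x ∈ 𝒦} → Fin L → Fin T,
      Fintype.card {g : {x : Fin N // ¬ x ∈ 𝒦} → Fin L → Fin T //
          P (posOf 𝒦 f) ∧ ∀ i, Q (g i) (posOf 𝒦 f)}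
        = if P (posOf 𝒦 f) then c ^ (Nat.card {x : Fin N // x ∉ 𝒦}) else 0 := by
    intro f
    rw [← Nat.card_eq_fintype_card]
    by_cases hP : P (posOf 𝒦 f)
    · rw [if_pos hP]
      have e2 : {g : {x : Fin N // ¬ x ∈ 𝒦} → Fin L → Fin T //
            P (posOf 𝒦 f) ∧ ∀ i, Q (g i) (posOf 𝒦 f)}
          ≃ ∀ _ : {x : Fin N // ¬ x ∈ 𝒦}, {b : Fin L → Fin T // Q b (posOf 𝒦 f)} :=
        (Equiv.subtypeEquivRight (fun g => by simp [hP])).trans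
          (Equiv.subtypePiEquivPi (p := fun _ b => Q b (posOf 𝒦 f)))
      rw [Nat.card_congr e2, Nat.card_pi]
      simp only [Finset.prod_const, Finset.card_univ]
      rw [hc _ hP, Nat.card_eq_fintype_card]
    · rw [if_neg hP]
      have : IsEmpty {g : {x : Fin N // ¬ x ∈ 𝒦} → Fin L → Fin T //
          P (posOf 𝒦 f) ∧ ∀ i, Q (g i) (posOf 𝒦 f)} := ⟨fun x => hP x.2.1⟩
      exact Nat.card_of_isEmpty
  calc ∑ f : {x : Fin N // x ∈ 𝒦} → Fin L → Fin T, Fintype.card _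
      = ∑ f : {x : Fin N // x ∈ 𝒦} → Fin L → Fin T,
          (if P (posOf 𝒦 f) then c ^ (Nat.card {x : Fin N // x ∉ 𝒦}) else 0) := by
        exact Finset.sum_congr rfl fun f _ => key f
    _ = _ := by
        rw [← Finset.sum_filter, Finset.sum_const, smul_eq_mul]
        congr 1
        rw [Nat.card_eq_fintype_card]
        exact (Fintype.card_subtype _).symm

/-- Conditional on the number of positive tests being `m`, the probability that COMP
succeeds equals `(1 - (m/T)^L)^(N-K)`.  The conditional probability is the proportion
of equally likely designs with `m` positive tests on which COMP succeeds. -/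
theorem comp_conditional_success (N K T L m : ℕ) (hT : 0 < T) (hm : m ≤ T)
    (𝒦 : Finset (Fin N)) (h𝒦 : 𝒦.card = K)
    (hne : (Finset.univ.filter (fun ω : Fin N → Fin L → Fin T =>
        (positiveTests 𝒦 ω).card = m)).Nonempty) :
    ((Finset.univ.filter (fun ω : Fin N → Fin L → Fin T =>
          (positiveTests 𝒦 ω).card = m ∧ compSucceeds 𝒦 ω)).card : ℝ)
        / ((Finset.univ.filter (fun ω : Fin N → Fin L → Fin T =>
          (positiveTests 𝒦 ω).card = m)).card : ℝ)
      = (1 - ((m : ℝ) / T) ^ L) ^ (N - K) := by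
  have hn : Nat.card {x : Fin N // x ∉ 𝒦} = N - K := by
    rw [Nat.card_eq_fintype_card, Fintype.card_subtype_compl]
    simp [h𝒦]
  set D := Nat.card {f : {x : Fin N // x ∈ 𝒦} → Fin L → Fin T //
      (posOf 𝒦 f).card = m} with hD
  have key1 : (Finset.univ.filter (fun ω : Fin N → Fin L → Fin T =>
        (positiveTests 𝒦 ω).card = m ∧ compSucceeds 𝒦 ω)).card
      = Nat.card {ω : Fin N → Fin L → Fin T //
        (positiveTests 𝒦 ω).card = m ∧ compSucceeds 𝒦 ω} := by
    rw [Nat.card_eq_fintype_card, Fintype.card_subtype]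
  have key2 : (Finset.univ.filter (fun ω : Fin N → Fin L → Fin T =>
        (positiveTests 𝒦 ω).card = m)).card
      = Nat.card {ω : Fin N → Fin L → Fin T // (positiveTests 𝒦 ω).card = m} := by
    rw [Nat.card_eq_fintype_card, Fintype.card_subtype]
  have hnum : Nat.card {ω : Fin N → Fin L → Fin T //
        (positiveTests 𝒦 ω).card = m ∧ compSucceeds 𝒦 ω}
      = D * (T ^ L - m ^ L) ^ (N - K) := by
    rw [← hn, hD]
    have h := card_filter_split 𝒦 (fun S => S.card = m) (fun b S => ∃ l, b l ∉ S)
      (T ^ L - m ^ L) (fun S hS => by rw [card_exists_not_mem, hS])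
    refine Eq.trans ?_ h
    apply Nat.card_congr
    exact Equiv.subtypeEquivRight fun ω => by simp [compSucceeds]
  have hden : Nat.card {ω : Fin N → Fin L → Fin T // (positiveTests 𝒦 ω).card = m}
      = D * (T ^ L) ^ (N - K) := by
    rw [← hn, hD]
    have h := card_filter_split 𝒦 (fun S => S.card = m)
      (fun (_ : Fin L → Fin T) (_ : Finset (Fin T)) => True) (T ^ L)
      (fun S _ => by
        rw [Nat.card_congr (Equiv.subtypeUnivEquiv (fun _ => trivial)), Nat.card_fun]
        simp [Nat.card_eq_fintype_card])
    refine Eq.trans ?_ h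
    apply Nat.card_congr
    exact Equiv.subtypeEquivRight fun ω => by simp
  have hDpos : 0 < D := by
    obtain ⟨ω, hω⟩ := hne
    simp only [Finset.mem_filter] at hω
    rw [hD, Nat.card_eq_fintype_card]
    exact Fintype.card_pos_iff.2 ⟨⟨fun i => ω i.1, by rw [← positiveTests_eq]; exact hω.2⟩⟩
  have hmL : m ^ L ≤ T ^ L := Nat.pow_le_pow_left hm L
  rw [key1, key2, hnum, hden]
  push_cast [hmL]
  have hD0 : (D : ℝ) ≠ 0 := Nat.cast_ne_zero.2 hDpos.ne'
  rw [mul_div_mul_left _ _ hD0, ← div_pow]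
  congr 1
  have hT0 : (T : ℝ) ≠ 0 := Nat.cast_ne_zero.2 hT.ne'
  rw [div_pow, sub_div, div_self (pow_ne_zero L hT0)]
end
end

section
/- The Bernoulli-design maximum rate expression and the constant-column-weight COMP rate compare as follows: ln 2 · (1-θ) > max_{ν>0} min{ (ν e^{-ν}/ln 2)·(1-θ)/θ , h(e^{-ν}) } for all θ ∈ (1/(e·(ln 2)²), 1), where h is the binary entropy function h(p) = -p log₂ p - (1-p) log₂(1-p). -/
open Real

/-- Binary entropy with base-2 logarithms. -/
noncomputable def binH (p : ℝ) : ℝ := -p * Real.logb 2 p - (1 - p) * Real.logb 2 (1 - p)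

/-- For `θ ∈ (1/(e (ln 2)²), 1)`, the constant column weight COMP rate `ln 2 · (1-θ)`
strictly exceeds the Bernoulli-design capacity
`max_{ν>0} min{ (ν e^{-ν}/ln 2)(1-θ)/θ, h(e^{-ν}) }`. -/
theorem ccw_beats_bernoulli_capacity (θ : ℝ)
    (hθl : 1 / (Real.exp 1 * (Real.log 2) ^ 2) < θ) (hθu : θ < 1) :
    (⨆ ν : {ν : ℝ // 0 < ν},
        min ((↑ν * Real.exp (-↑ν) / Real.log 2) * ((1 - θ) / θ)) (binH (Real.exp (-↑ν))))
      < Real.log 2 * (1 - θ) := by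
  have hlog2 : (0:ℝ) < Real.log 2 := Real.log_pos (by norm_num)
  have hepos : (0:ℝ) < Real.exp 1 := Real.exp_pos 1
  have hθ0 : 0 < θ := lt_trans (by positivity) hθl
  have h1θ : 0 < 1 - θ := by linarith
  -- the hypothesis written multiplicatively
  have hmul : 1 < θ * (Real.exp 1 * (Real.log 2) ^ 2) := by
    rw [div_lt_iff₀ (by positivity)] at hθl
    linarith
  have hinv : Real.exp (-1) * Real.exp 1 = 1 := by
    rw [← Real.exp_add]; norm_num
  have hexpneg : 0 < Real.exp (-1) := Real.exp_pos _
  -- the constant bound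
  set B : ℝ := (Real.exp (-1) / Real.log 2) * ((1 - θ) / θ) with hB
  have hBlt : B < Real.log 2 * (1 - θ) := by
    rw [hB, div_mul_div_comm, div_lt_iff₀ (by positivity)]
    have : Real.exp (-1) < θ * (Real.log 2) ^ 2 := by
      nlinarith
    nlinarith
  have key : ∀ ν : {ν : ℝ // 0 < ν},
      min ((↑ν * Real.exp (-↑ν) / Real.log 2) * ((1 - θ) / θ)) (binH (Real.exp (-↑ν))) ≤ B := by
    intro ⟨ν, hν⟩
    refine le_trans (min_le_left _ _) ?_
    have hbound : ν * Real.exp (-ν) ≤ Real.exp (-1) := by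
      have h := Real.add_one_le_exp (ν - 1)
      have h2 : Real.exp (ν - 1) = Real.exp ν * Real.exp (-1) := by
        rw [← Real.exp_add]; ring_nf
      have h3 : ν ≤ Real.exp ν * Real.exp (-1) := by
        rw [← h2]; linarith
      have h4 : 0 < Real.exp (-ν) := Real.exp_pos _
      have h5 : Real.exp ν * Real.exp (-ν) = 1 := by
        rw [← Real.exp_add]; simp
      nlinarith
    rw [hB]
    have : (0:ℝ) < (1 - θ) / θ := by positivity
    apply mul_le_mul_of_nonneg_right _ (le_of_lt this)
    gcongr
  haveI : Nonempty {ν : ℝ // 0 < ν} := ⟨⟨1, one_pos⟩⟩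
  exact lt_of_le_of_lt (ciSup_le key) hBlt
end
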